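/- Let U ⊆ ℂᵐ be open, let F : U → ℂⁿ be holomorphic satisfying the conformality condition, and let f = Re ∘ F : U → ℝⁿ, with real differential df(z)(v) = Re(DF(z)(v)). Then the pullback of the Euclidean metric by f is invariant under the complex structure: for every z ∈ U and all v, w ∈ ℂᵐ, ⟨df(z)(i·v), df(z)(i·w)⟩ = ⟨df(z)(v), df(z)(w)⟩. -/

import Mathlib

/-- For a holomorphic `F : U → ℂⁿ` satisfying the conformality condition, the
pullback of the euclidean metric by `f = Re ∘ F` is invariant under the complex
structure: `⟨df(z)(i·v), df(z)(i·w)⟩ = ⟨df(z)(v), df(z)(w)⟩`. -/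
theorem pullback_metric_J_invariant
    (m n : ℕ) (U : Set (Fin m → ℂ)) (hU : IsOpen U)
    (F : (Fin m → ℂ) → (Fin n → ℂ)) (hF : DifferentiableOn ℂ F U)
    (hconf : ∀ z ∈ U, ∀ v w : Fin m → ℂ,
      ∑ i, fderiv ℂ F z v i * fderiv ℂ F z w i = 0)
    (df : (Fin m → ℂ) → (Fin m → ℂ) → EuclideanSpace ℝ (Fin n))
    (hdf : ∀ z v, df z v = fun i => (fderiv ℂ F z v i).re) :
    ∀ z ∈ U, ∀ v w : Fin m → ℂ,
      @inner ℝ (EuclideanSpace ℝ (Fin n)) _ (df z (Complex.I • v)) (df z (Complex.I • w)) =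
        @inner ℝ (EuclideanSpace ℝ (Fin n)) _ (df z v) (df z w) := by
  intro z hz v w
  have h := congrArg Complex.re (hconf z hz v w)
  have hsmul : ∀ u : Fin m → ℂ, fderiv ℂ F z (Complex.I • u) = Complex.I • fderiv ℂ F z u :=
    fun u => (fderiv ℂ F z).map_smul Complex.I u
  simp only [Complex.re_sum, Complex.mul_re, Complex.zero_re] at h
  simp only [hdf, PiLp.inner_apply, RCLike.inner_apply, starRingEnd_apply, star_trivial,
    hsmul, Pi.smul_apply, smul_eq_mul, Complex.mul_re, Complex.I_re, Complex.I_im]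
  ring_nf
  ring_nf at h
  rw [Finset.sum_sub_distrib, sub_eq_zero] at h
  linarith [h, Finset.sum_congr rfl (fun (x : Fin n) (_ : x ∈ Finset.univ) => mul_comm ((fderiv ℂ F z v x).re) ((fderiv ℂ F z w x).re)),
    Finset.sum_congr rfl (fun (x : Fin n) (_ : x ∈ Finset.univ) => mul_comm ((fderiv ℂ F z v x).im) ((fderiv ℂ F z w x).im))]
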